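/- Let 0 < β < 1/2 and let (Xⁿ,Wⁿ) be a pair of random vectors on 𝒳ⁿ × 𝒳ⁿ satisfying Pr((1/n)·d_H(Xⁿ,Wⁿ) ≥ β) ≤ ε. Then, for every positive integer K, there exist an encoder κₙ : 𝒳ⁿ → 𝒦ₙ with |𝒦ₙ| ≤ K and a decoder τₙ : 𝒦ₙ × 𝒳ⁿ → 𝒳ⁿ such that Pr(τₙ(κₙ(Xⁿ), Wⁿ) ≠ Xⁿ) ≤ ε + νₙ(β)/K, where νₙ(β) := Σ_{i=0}^{⌈nβ⌉−1} (|𝒳|−1)ⁱ·C(n,i) is the size of the Hamming ball of radius ⌈nβ⌉−1 in 𝒳ⁿ. -/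

import Mathlib

open Finset

namespace Stmt10

/-- The size `νₙ(β)` of the Hamming ball of radius `⌈nβ⌉ − 1` in 𝒳ⁿ. -/
noncomputable def hammingBallSize (X : Type) [Fintype X] (n : ℕ) (β : ℝ) : ℕ :=
  ∑ i ∈ Finset.range ⌈(n : ℝ) * β⌉₊, (Fintype.card X - 1) ^ i * n.choose i

private def sphEnc {X : Type} [Fintype X] [DecidableEq X] {n : ℕ} (w : Fin n → X) (i : ℕ)
    (x : {x : Fin n → X // hammingDist x w = i}) :
    Σ s : {s : Finset (Fin n) // s.card = i},
      ∀ j : {j : Fin n // j ∈ s.1}, {y : X // y ≠ w j.1} :=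
  ⟨⟨univ.filter (fun j => x.1 j ≠ w j), x.2⟩,
    fun j => ⟨x.1 j.1, (mem_filter.mp j.2).2⟩⟩

private def sphDec {X : Type} [Fintype X] [DecidableEq X] {n : ℕ} (w : Fin n → X) (i : ℕ)
    (t : Σ s : {s : Finset (Fin n) // s.card = i},
      ∀ j : {j : Fin n // j ∈ s.1}, {y : X // y ≠ w j.1}) : Fin n → X := fun j =>
  if h : j ∈ t.1.1 then (t.2 ⟨j, h⟩).1 else w j

private lemma sphDec_enc {X : Type} [Fintype X] [DecidableEq X] {n : ℕ} (w : Fin n → X) (i : ℕ)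
    (x : {x : Fin n → X // hammingDist x w = i}) : sphDec w i (sphEnc w i x) = x.1 := by
  funext j
  by_cases h : x.1 j ≠ w j
  · rw [sphDec, sphEnc]
    rw [dif_pos (by simpa using h)]
  · push_neg at h
    rw [sphDec, sphEnc]
    simp only
    rw [dif_neg (by simpa using h), h]

/-- Size of the Hamming sphere of radius `i` is at most `(q-1)^i * C(n,i)`. -/
lemma sphere_card_le {X : Type} [Fintype X] [DecidableEq X] {n : ℕ}
    (w : Fin n → X) (i : ℕ) :
    ((univ : Finset (Fin n → X)).filter fun x => hammingDist x w = i).card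
      ≤ (Fintype.card X - 1) ^ i * n.choose i := by
  classical
  rw [← Fintype.card_subtype]
  have key : Fintype.card (Σ s : {s : Finset (Fin n) // s.card = i},
        ∀ j : {j : Fin n // j ∈ s.1}, {y : X // y ≠ w j.1})
      = n.choose i * (Fintype.card X - 1) ^ i := by
    rw [Fintype.card_sigma]
    have h1 : ∀ s : {s : Finset (Fin n) // s.card = i},
        Fintype.card (∀ j : {j : Fin n // j ∈ s.1}, {y : X // y ≠ w j.1})
          = (Fintype.card X - 1) ^ i := by
      intro s
      rw [Fintype.card_pi]
      have h2 : ∀ j : {j : Fin n // j ∈ s.1},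
          Fintype.card {y : X // y ≠ w j.1} = Fintype.card X - 1 := by
        intro j
        have := Fintype.card_subtype_compl (fun y : X => y = w j.1)
        simpa [Fintype.card_subtype_eq] using this
      simp only [h2]
      rw [Finset.prod_const, card_univ, Fintype.card_coe, s.2]
    simp only [h1, Finset.sum_const, smul_eq_mul, card_univ]
    rw [Fintype.card_finset_len, Fintype.card_fin]
  rw [mul_comm] at key
  rw [← key]
  apply Fintype.card_le_of_injective (sphEnc w i)
  intro a b hab
  have := congrArg (sphDec w i) hab
  rw [sphDec_enc, sphDec_enc] at this
  exact Subtype.ext this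

/-- Ball bound. -/
lemma ball_card_le {X : Type} [Fintype X] [DecidableEq X] {n : ℕ}
    (w : Fin n → X) (r : ℕ) :
    ((univ : Finset (Fin n → X)).filter fun x => hammingDist x w < r).card
      ≤ ∑ i ∈ Finset.range r, (Fintype.card X - 1) ^ i * n.choose i := by
  classical
  have hsub : ((univ : Finset (Fin n → X)).filter fun x => hammingDist x w < r)
      ⊆ (Finset.range r).biUnion
        (fun i => (univ : Finset (Fin n → X)).filter fun x => hammingDist x w = i) := by
    intro x hx
    simp only [mem_filter, mem_univ, true_and] at hx
    simp only [mem_biUnion, mem_range, mem_filter, mem_univ, true_and]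
    exact ⟨hammingDist x w, hx, rfl⟩
  calc _ ≤ _ := Finset.card_le_card hsub
    _ ≤ ∑ i ∈ Finset.range r,
        ((univ : Finset (Fin n → X)).filter fun x => hammingDist x w = i).card :=
      Finset.card_biUnion_le
    _ ≤ _ := Finset.sum_le_sum fun i _ => sphere_card_le w i

lemma color_count {V : Type} [Fintype V] [DecidableEq V] {K : ℕ} {x x' : V} (hne : x' ≠ x) :
    ((univ : Finset (V → Fin K)).filter fun κ => κ x' = κ x).card * K
      = K ^ (Fintype.card V) := by
  classical
  have key : (((univ : Finset (V → Fin K)).filter fun κ => κ x' = κ x)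
        ×ˢ (univ : Finset (Fin K))).card
      = (univ : Finset (V → Fin K)).card := by
    apply Finset.card_nbij' (fun p => Function.update p.1 x' p.2)
        (fun κ => (Function.update κ x' (κ x), κ x'))
    · intro p _; exact mem_univ _
    · intro κ _
      simp only [Finset.mem_coe, mem_product, mem_filter, mem_univ, true_and, and_true]
      rw [Function.update_self, Function.update_of_ne (Ne.symm hne)]
    · intro p hp
      simp only [Finset.mem_coe, mem_product, mem_filter, mem_univ, true_and, and_true] at hp
      have h1 := hp
      ext1
      · simp only
        rw [Function.update_of_ne (Ne.symm hne)]
        funext j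
        by_cases hj : j = x'
        · subst hj; rw [Function.update_self]; exact h1.symm
        · rw [Function.update_of_ne hj, Function.update_of_ne hj]
      · simp only
        rw [Function.update_self]
    · intro κ _
      simp only
      funext j
      by_cases hj : j = x'
      · subst hj; rw [Function.update_self]
      · rw [Function.update_of_ne hj, Function.update_of_ne hj]
  rw [Finset.card_product, Finset.card_univ, Finset.card_univ, Fintype.card_fin,
    Fintype.card_fun, Fintype.card_fin] at key
  exact key

open Classical in
private noncomputable def decoder {X : Type} [Fintype X] [DecidableEq X] {n K : ℕ}
    [Nonempty (Fin n → X)] (r : ℕ) (κ : (Fin n → X) → Fin K) (k : Fin K) (w : Fin n → X) :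
    Fin n → X :=
  if h : ∃ x : Fin n → X, hammingDist x w < r ∧ κ x = k ∧
      ∀ y, hammingDist y w < r → κ y = k → y = x
  then h.choose else Classical.ofNonempty

private lemma decoder_correct {X : Type} [Fintype X] [DecidableEq X] {n K : ℕ}
    [Nonempty (Fin n → X)] (r : ℕ) (κ : (Fin n → X) → Fin K) (x w : Fin n → X)
    (hx : hammingDist x w < r)
    (hu : ∀ y, hammingDist y w < r → κ y = κ x → y = x) :
    decoder r κ (κ x) w = x := by
  have h : ∃ z : Fin n → X, hammingDist z w < r ∧ κ z = κ x ∧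
      ∀ y, hammingDist y w < r → κ y = κ x → y = z := ⟨x, hx, rfl, hu⟩
  rw [decoder, dif_pos h]
  obtain ⟨h1, h2, _⟩ := h.choose_spec
  exact hu _ h1 h2

theorem boosting
    {X : Type} [Fintype X] [DecidableEq X]
    {n : ℕ} (β ε : ℝ) (hβ0 : 0 < β) (hβ1 : β < 1 / 2)
    (p : (Fin n → X) → (Fin n → X) → ℝ)
    (hp0 : ∀ x w, 0 ≤ p x w)
    (hp1 : ∑ x : (Fin n → X), ∑ w : (Fin n → X), p x w = 1)
    (hε : (∑ x : (Fin n → X), ∑ w : (Fin n → X),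
        if β ≤ (hammingDist x w : ℝ) / n then p x w else 0) ≤ ε) :
    ∀ K : ℕ, 0 < K →
      ∃ (κ : (Fin n → X) → Fin K) (τ : Fin K → (Fin n → X) → (Fin n → X)),
        (∑ x : (Fin n → X), ∑ w : (Fin n → X),
            if τ (κ x) w = x then 0 else p x w)
          ≤ ε + (hammingBallSize X n β : ℝ) / K := by
  classical
  intro K hK
  by_cases hV : Nonempty (Fin n → X)
  case neg =>
    rw [not_nonempty_iff] at hV
    rw [Finset.univ_eq_empty, Finset.sum_empty] at hp1
    exact absurd hp1 (by norm_num)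
  haveI := hV
  have hε0 : (0:ℝ) ≤ ε := by
    refine le_trans ?_ hε
    apply Finset.sum_nonneg
    intro x _
    apply Finset.sum_nonneg
    intro w _
    split_ifs
    · exact hp0 x w
    · exact le_rfl
  by_cases hn : n = 0
  case pos =>
    subst hn
    refine ⟨fun _ => ⟨0, hK⟩, fun _ w => w, ?_⟩
    have hz : ∀ x w : Fin 0 → X, w = x := fun x w => funext (fun j => j.elim0)
    have : (∑ x : Fin 0 → X, ∑ w : Fin 0 → X, if w = x then (0:ℝ) else p x w) = 0 := by
      apply Finset.sum_eq_zero; intro x _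
      apply Finset.sum_eq_zero; intro w _
      rw [if_pos (hz x w)]
    rw [this]
    have : (0:ℝ) ≤ (hammingBallSize X 0 β : ℝ) / K := by positivity
    linarith
  -- main case
  have hn1 : (0:ℝ) < n := by exact_mod_cast Nat.pos_of_ne_zero hn
  set r : ℕ := ⌈(n : ℝ) * β⌉₊ with hr
  have hgood : ∀ x w : Fin n → X, ¬ (β ≤ (hammingDist x w : ℝ)/n) → hammingDist x w < r := by
    intro x w h
    rw [not_le, div_lt_iff₀ hn1] at h
    rw [hr, Nat.lt_ceil]
    linarith
  set M := Fintype.card (Fin n → X) with hM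
  set T : ℝ := (K:ℝ) ^ M with hT
  have hKR : (0:ℝ) < K := by exact_mod_cast hK
  have hT0 : (0:ℝ) < T := by positivity
  set C : ℝ := T / K with hCdef
  have hC0 : (0:ℝ) ≤ C := by positivity
  set ν : ℝ := (hammingBallSize X n β : ℝ) with hν
  have hν0 : (0:ℝ) ≤ ν := by positivity
  have hball : ∀ w : Fin n → X, (((univ : Finset (Fin n → X)).filter
      fun x => hammingDist x w < r).card : ℝ) ≤ ν := by
    intro w
    rw [hν]
    exact_mod_cast ball_card_le w r
  have hCcard : ∀ x x' : Fin n → X, x' ≠ x →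
      (((univ : Finset ((Fin n → X) → Fin K)).filter fun κ => κ x' = κ x).card : ℝ) = C := by
    intro x x' hne
    have h := color_count (K := K) hne
    have h2 : (((univ : Finset ((Fin n → X) → Fin K)).filter
        fun κ => κ x' = κ x).card : ℝ) * K = T := by
      rw [hT, hM]; exact_mod_cast h
    rw [hCdef, eq_div_iff hKR.ne']
    exact h2
  have claimB : ∀ x w : Fin n → X,
      (∑ κ : (Fin n → X) → Fin K, if decoder r κ (κ x) w = x then (0:ℝ) else p x w)
        ≤ T * (if β ≤ (hammingDist x w : ℝ)/n then p x w else 0) + (ν * C) * p x w := by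
    intro x w
    by_cases hb : β ≤ (hammingDist x w : ℝ)/n
    · rw [if_pos hb]
      have h1 : (∑ κ : (Fin n → X) → Fin K, if decoder r κ (κ x) w = x then (0:ℝ) else p x w)
          ≤ ∑ _κ : (Fin n → X) → Fin K, p x w := by
        apply Finset.sum_le_sum; intro κ _; split_ifs; exacts [hp0 x w, le_rfl]
      refine le_trans h1 ?_
      rw [Finset.sum_const, card_univ, Fintype.card_fun, Fintype.card_fin, nsmul_eq_mul]
      push_cast
      rw [hT]
      have := mul_nonneg (mul_nonneg hν0 hC0) (hp0 x w)
      linarith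
    · rw [if_neg hb, mul_zero, zero_add]
      have hxw : hammingDist x w < r := hgood x w hb
      have hterm : ∀ κ : (Fin n → X) → Fin K,
          (if decoder r κ (κ x) w = x then (0:ℝ) else p x w)
            ≤ (if ∃ x', x' ≠ x ∧ hammingDist x' w < r ∧ κ x' = κ x then p x w else 0) := by
        intro κ
        by_cases hcol : ∃ x', x' ≠ x ∧ hammingDist x' w < r ∧ κ x' = κ x
        · rw [if_pos hcol]; split_ifs; exacts [hp0 x w, le_rfl]
        · rw [if_neg hcol]
          have hdec : decoder r κ (κ x) w = x := by
            apply decoder_correct r κ x w hxw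
            intro y hy hky
            by_contra hyx
            exact hcol ⟨y, hyx, hy, hky⟩
          rw [if_pos hdec]
      refine le_trans (Finset.sum_le_sum fun κ _ => hterm κ) ?_
      rw [Finset.sum_ite, Finset.sum_const, Finset.sum_const_zero, add_zero, nsmul_eq_mul]
      apply mul_le_mul_of_nonneg_right ?_ (hp0 x w)
      have hsub : ((univ : Finset ((Fin n → X) → Fin K)).filter
          fun κ => ∃ x', x' ≠ x ∧ hammingDist x' w < r ∧ κ x' = κ x)
          ⊆ (((univ : Finset (Fin n → X)).filter fun x' => hammingDist x' w < r).erase x).biUnion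
            (fun x' => (univ : Finset ((Fin n → X) → Fin K)).filter fun κ => κ x' = κ x) := by
        intro κ hκ
        simp only [mem_filter, mem_univ, true_and] at hκ
        obtain ⟨x', hne, hd, hcol⟩ := hκ
        simp only [mem_biUnion, mem_erase, mem_filter, mem_univ, true_and]
        exact ⟨x', ⟨hne, hd⟩, hcol⟩
      have h1 : ((univ : Finset ((Fin n → X) → Fin K)).filter
          fun κ => ∃ x', x' ≠ x ∧ hammingDist x' w < r ∧ κ x' = κ x).card
          ≤ ∑ x' ∈ ((univ : Finset (Fin n → X)).filter
              fun x' => hammingDist x' w < r).erase x,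
            ((univ : Finset ((Fin n → X) → Fin K)).filter fun κ => κ x' = κ x).card :=
        le_trans (Finset.card_le_card hsub) Finset.card_biUnion_le
      calc (((univ : Finset ((Fin n → X) → Fin K)).filter
          fun κ => ∃ x', x' ≠ x ∧ hammingDist x' w < r ∧ κ x' = κ x).card : ℝ)
          ≤ ∑ x' ∈ ((univ : Finset (Fin n → X)).filter
              fun x' => hammingDist x' w < r).erase x,
            (((univ : Finset ((Fin n → X) → Fin K)).filter
              fun κ => κ x' = κ x).card : ℝ) := by exact_mod_cast h1
        _ = ∑ x' ∈ ((univ : Finset (Fin n → X)).filter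
              fun x' => hammingDist x' w < r).erase x, C :=
          Finset.sum_congr rfl fun x' hx' => hCcard x x' (Finset.mem_erase.mp hx').1
        _ ≤ ν * C := by
          rw [Finset.sum_const, nsmul_eq_mul]
          apply mul_le_mul_of_nonneg_right ?_ hC0
          refine le_trans ?_ (hball w)
          exact_mod_cast Finset.card_le_card (Finset.erase_subset _ _)
  have swap : (∑ κ : (Fin n → X) → Fin K, ∑ x : Fin n → X, ∑ w : Fin n → X,
        if decoder r κ (κ x) w = x then (0:ℝ) else p x w)
      = ∑ x : Fin n → X, ∑ w : Fin n → X, ∑ κ : (Fin n → X) → Fin K,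
        if decoder r κ (κ x) w = x then (0:ℝ) else p x w := by
    rw [Finset.sum_comm]
    exact Finset.sum_congr rfl fun x _ => Finset.sum_comm
  have total : (∑ κ : (Fin n → X) → Fin K, ∑ x : Fin n → X, ∑ w : Fin n → X,
      if decoder r κ (κ x) w = x then (0:ℝ) else p x w) ≤ T * ε + ν * C := by
    rw [swap]
    calc (∑ x : Fin n → X, ∑ w : Fin n → X, ∑ κ : (Fin n → X) → Fin K,
          if decoder r κ (κ x) w = x then (0:ℝ) else p x w)
        ≤ ∑ x : Fin n → X, ∑ w : Fin n → X,
            (T * (if β ≤ (hammingDist x w : ℝ)/n then p x w else 0) + (ν * C) * p x w) :=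
        Finset.sum_le_sum fun x _ => le_trans
          (Finset.sum_le_sum fun w _ => claimB x w) le_rfl
      _ = T * (∑ x : Fin n → X, ∑ w : Fin n → X,
            (if β ≤ (hammingDist x w : ℝ)/n then p x w else 0))
          + (ν * C) * (∑ x : Fin n → X, ∑ w : Fin n → X, p x w) := by
        simp only [Finset.sum_add_distrib, Finset.mul_sum]
      _ ≤ T * ε + ν * C := by
        rw [hp1, mul_one]
        exact add_le_add_left (mul_le_mul_of_nonneg_left hε hT0.le) _
  haveI : Nonempty ((Fin n → X) → Fin K) := ⟨fun _ => ⟨0, hK⟩⟩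
  have havg : (∑ κ : (Fin n → X) → Fin K, ∑ x : Fin n → X, ∑ w : Fin n → X,
      if decoder r κ (κ x) w = x then (0:ℝ) else p x w)
      ≤ ∑ _κ : (Fin n → X) → Fin K, (ε + ν / K) := by
    rw [Finset.sum_const, Finset.card_univ, nsmul_eq_mul]
    have hcw : Fintype.card ((Fin n → X) → Fin K) = K ^ M := by
      rw [hM, Fintype.card_fun, Fintype.card_fin]
    rw [hcw]
    refine le_trans total (le_of_eq ?_)
    push_cast
    rw [hT, hCdef]
    field_simp
    ring
  obtain ⟨κ, -, hκ⟩ := Finset.exists_le_of_sum_le Finset.univ_nonempty havg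
  exact ⟨κ, decoder r κ, hκ⟩

end Stmt10
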